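/- For any tree T on n ≥ 3 vertices, the subtree core of T contains no pendant vertex. -/

import Mathlib

open SimpleGraph

/-- Eccentricity of a vertex: maximum distance to any vertex. -/
noncomputable def ecc {V : Type*} [Fintype V] (G : SimpleGraph V) (v : V) : ℕ :=
  Finset.univ.sup fun u => G.dist u v

/-- Center: vertices of minimum eccentricity. -/
noncomputable def center {V : Type*} [Fintype V] (G : SimpleGraph V) : Set V :=
  {v | ∀ u, ecc G v ≤ ecc G u}

/-- Number of vertices of the component of `G - v` containing `u`; this equals the
number of edges of the corresponding branch of a tree at `v`. -/
noncomputable def branchSize {V : Type*} (G : SimpleGraph V) (v : V) (u : {x : V // x ≠ v}) : ℕ :=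
  Set.ncard {x : {y : V // y ≠ v} | (G.induce {y : V | y ≠ v}).Reachable ⟨u.1, u.2⟩ ⟨x.1, x.2⟩}

/-- Weight of a vertex: maximal number of edges in a branch at `v`. -/
noncomputable def weight {V : Type*} [Fintype V] [DecidableEq V] (G : SimpleGraph V) (v : V) : ℕ :=
  Finset.univ.sup fun u : {x : V // x ≠ v} => branchSize G v u

/-- Centroid: vertices of minimum weight. -/
noncomputable def centroid {V : Type*} [Fintype V] [DecidableEq V] (G : SimpleGraph V) : Set V :=
  {v | ∀ u, weight G v ≤ weight G u}

/-- Number of subtrees (vertex sets inducing a connected subgraph) containing all of `A`. -/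
noncomputable def numSubtreesOn {V : Type*} (G : SimpleGraph V) (A : Set V) : ℕ :=
  Set.ncard {S : Set V | A ⊆ S ∧ (G.induce S).Connected}

/-- Number of subtrees containing the vertex `v`. -/
noncomputable def numSubtrees {V : Type*} (G : SimpleGraph V) (v : V) : ℕ :=
  numSubtreesOn G {v}

/-- Subtree core: vertices maximizing the number of subtrees containing them. -/
noncomputable def subtreeCore {V : Type*} (G : SimpleGraph V) : Set V :=
  {v | ∀ u, numSubtrees G u ≤ numSubtrees G v}

/-- Distance between two sets of vertices: minimum pairwise distance. -/
noncomputable def setDist {V : Type*} (G : SimpleGraph V) (A B : Set V) : ℕ :=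
  sInf {d | ∃ a ∈ A, ∃ b ∈ B, G.dist a b = d}

/-- The path-star tree `P_{n-g,g}`: a path on vertices `0, …, n-g-1` (paper labels
`1, …, n-g`) with `g` pendant vertices `n-g, …, n-1` attached to vertex `n-g-1`. -/
def pathStar (n g : ℕ) : SimpleGraph (Fin n) :=
  SimpleGraph.fromRel fun i j =>
    (i.val + 1 = j.val ∧ j.val < n - g) ∨ (i.val = n - g - 1 ∧ n - g ≤ j.val)

/-- The tree obtained from `G` by detaching the pendant vertex `y` and attaching it
as a pendant vertex adjacent to `w`. -/
def reattach {V : Type*} (G : SimpleGraph V) (y w : V) : SimpleGraph V :=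
  SimpleGraph.fromRel fun a b => (G.Adj a b ∧ a ≠ y ∧ b ≠ y) ∨ (a = y ∧ b = w)



private lemma reach_mono {V : Type} (G : SimpleGraph V) {S T : Set V} (h : S ⊆ T)
    {a b : S} (hr : (G.induce S).Reachable a b) :
    (G.induce T).Reachable ⟨a.1, h a.2⟩ ⟨b.1, h b.2⟩ := by
  exact hr.map (induceHomOfLE (G := G) h).toHom

private lemma conn_singleton {V : Type} (G : SimpleGraph V) (a : V) :
    (G.induce {a}).Connected := by
  have hne : Nonempty ({a} : Set V) := ⟨⟨a, rfl⟩⟩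
  refine ⟨fun x y => ?_⟩
  have : x = y := Subtype.ext (x.2.trans y.2.symm)
  exact this ▸ Reachable.refl x

private lemma conn_pair {V : Type} (G : SimpleGraph V) {a b : V} (hab : G.Adj a b) :
    (G.induce {a, b}).Connected := by
  have hne : Nonempty ({a, b} : Set V) := ⟨⟨a, Or.inl rfl⟩⟩
  refine ⟨fun x y => ?_⟩
  have hx := x.2
  have hy := y.2
  simp only [Set.mem_insert_iff, Set.mem_singleton_iff] at hx hy
  rcases hx with hx | hx <;> rcases hy with hy | hy
  · exact (Subtype.ext (hx.trans hy.symm)) ▸ Reachable.refl x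
  · exact Adj.reachable (by show G.Adj x.1 y.1; rw [hx, hy]; exact hab)
  · exact Adj.reachable (by show G.Adj x.1 y.1; rw [hx, hy]; exact hab.symm)
  · exact (Subtype.ext (hx.trans hy.symm)) ▸ Reachable.refl x

private lemma conn_insert {V : Type} (G : SimpleGraph V) {v u : V} (hadj : G.Adj v u)
    {S : Set V} (hu : u ∈ S) (hc : (G.induce S).Connected) :
    (G.induce (insert v S)).Connected := by
  have hus : u ∈ insert v S := Set.mem_insert_of_mem _ hu
  have hne : Nonempty (insert v S : Set V) := ⟨⟨u, hus⟩⟩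
  refine ⟨fun x y => ?_⟩
  have key : ∀ z : (insert v S : Set V), (G.induce (insert v S)).Reachable z ⟨u, hus⟩ := by
    intro z
    rcases z.2 with hz | hz
    · exact Adj.reachable (by show G.Adj z.1 u; rw [hz]; exact hadj)
    · have := reach_mono G (Set.subset_insert v S) (hc.preconnected ⟨z.1, hz⟩ ⟨u, hu⟩)
      simpa using this
  exact (key x).trans (key y).symm

private lemma conn_remove {V : Type} (G : SimpleGraph V) {v u : V}
    (hadj : G.Adj v u) (huniq : ∀ z, G.Adj v z → z = u)
    {S : Set V} (hu : u ∈ S) (hc : (G.induce S).Connected) :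
    (G.induce (S \ {v})).Connected := by
  classical
  have huS : u ∈ S \ {v} := ⟨hu, hadj.ne'⟩
  set f : S → (S \ {v} : Set V) := fun x =>
    if hx : x.1 = v then ⟨u, huS⟩ else ⟨x.1, ⟨x.2, hx⟩⟩ with hf
  have key : ∀ (a b : S) (w : (G.induce S).Walk a b),
      (G.induce (S \ {v})).Reachable (f a) (f b) := by
    intro a b w
    induction w with
    | nil => exact Reachable.refl _
    | @cons x z b h p ih =>
      refine Reachable.trans ?_ ih
      by_cases hx : x.1 = v
      · by_cases hz : z.1 = v
        · have e : f x = f z := by simp [hf, hx, hz]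
          rw [e]
        · have hzu : z.1 = u := huniq z.1 (by
            have h' : G.Adj x.1 z.1 := h
            rwa [hx] at h')
          have e : f x = f z := by
            simp [hf, hx, hz, Subtype.ext_iff, hzu, hadj.ne']
          rw [e]
      · by_cases hz : z.1 = v
        · have hxu : x.1 = u := huniq x.1 (by
            have h' : G.Adj z.1 x.1 := h.symm
            rwa [hz] at h')
          have e : f x = f z := by
            simp [hf, hx, hz, Subtype.ext_iff, hxu, hadj.ne']
          rw [e]
        · refine Adj.reachable ?_
          show (G.induce (S \ {v})).Adj (f x) (f z)
          simp only [hf, dif_neg hx, dif_neg hz]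
          exact h
  have hne : Nonempty (S \ {v} : Set V) := ⟨⟨u, huS⟩⟩
  refine ⟨fun x y => ?_⟩
  have hfx : f ⟨x.1, x.2.1⟩ = x := by
    apply Subtype.ext
    simp [hf, show x.1 ≠ v from x.2.2]
  have hfy : f ⟨y.1, y.2.1⟩ = y := by
    apply Subtype.ext
    simp [hf, show y.1 ≠ v from y.2.2]
  rcases hc.preconnected ⟨x.1, x.2.1⟩ ⟨y.1, y.2.1⟩ with ⟨w⟩
  have := key _ _ w
  rwa [hfx, hfy] at this

theorem subtreeCore_no_pendant {V : Type} [Fintype V] [DecidableEq V]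
    (G : SimpleGraph V) [DecidableRel G.Adj] (hT : G.IsTree)
    (h3 : 3 ≤ Fintype.card V) (v : V) (hv : G.degree v = 1) :
    v ∉ subtreeCore G := by
  classical
  -- the unique neighbor u of v
  obtain ⟨u, hnb⟩ : ∃ u, G.neighborFinset v = {u} := Finset.card_eq_one.mp hv
  have hadj : G.Adj v u := by
    rw [← SimpleGraph.mem_neighborFinset, hnb]; exact Finset.mem_singleton_self u
  have huniq : ∀ z, G.Adj v z → z = u := by
    intro z hz
    have : z ∈ G.neighborFinset v := (SimpleGraph.mem_neighborFinset G v z).mpr hz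
    rw [hnb] at this
    exact Finset.mem_singleton.mp this
  -- a neighbor w of u different from v
  obtain ⟨w, hw, hwv⟩ : ∃ w, G.Adj u w ∧ w ≠ v := by
    by_contra hno
    push_neg at hno
    have claim : ∀ (y t : V) (p : G.Walk y t), t = v → y = v ∨ y = u := by
      intro y t p
      induction p with
      | nil => intro h; exact Or.inl h
      | @cons y z _ h p ih =>
        intro htv
        rcases ih htv with hz | hz
        · exact Or.inr (huniq y (hz ▸ h).symm)
        · exact Or.inl (hno y (hz ▸ h).symm)
    obtain ⟨x, hxv, hxu⟩ : ∃ x : V, x ≠ v ∧ x ≠ u := by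
      by_contra hc
      push_neg at hc
      have hsub : (Finset.univ : Finset V) ⊆ {v, u} := by
        intro x _
        rcases eq_or_ne x v with h | h
        · simp [h]
        · simp [hc x h]
      have := Finset.card_le_card hsub
      have h2 : ({v, u} : Finset V).card ≤ 2 := by
        apply le_trans (Finset.card_insert_le _ _); simp
      rw [Finset.card_univ] at this
      omega
    obtain ⟨p⟩ := hT.isConnected.preconnected x v
    rcases claim x v p rfl with h | h
    · exact hxv h
    · exact hxu h
  -- the two families of subtrees
  set A : Set (Set V) := {S | u ∈ S ∧ v ∉ S ∧ (G.induce S).Connected} with hA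
  set B : Set (Set V) := {S | u ∈ S ∧ v ∈ S ∧ (G.induce S).Connected} with hB
  have hBA : B = (insert v) '' A := by
    ext S
    constructor
    · rintro ⟨hus, hvs, hc⟩
      refine ⟨S \ {v}, ⟨⟨hus, hadj.ne'⟩, by simp, conn_remove G hadj huniq hus hc⟩, ?_⟩
      rw [Set.insert_diff_singleton, Set.insert_eq_self.mpr hvs]
    · rintro ⟨T, ⟨huT, hvT, hcT⟩, rfl⟩
      exact ⟨Set.mem_insert_of_mem _ huT, Set.mem_insert _ _, conn_insert G hadj huT hcT⟩
  have hinj : Set.InjOn (insert v) A := by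
    intro S hS T hT h
    have : insert v S \ {v} = insert v T \ {v} := by rw [h]
    rwa [Set.insert_diff_self_of_notMem hS.2.1, Set.insert_diff_self_of_notMem hT.2.1] at this
  have hcard : B.ncard = A.ncard := by
    rw [hBA]; exact Set.ncard_image_of_injOn hinj
  -- numSubtrees u = 2 * A.ncard
  have hu2 : numSubtrees G u = A.ncard + B.ncard := by
    have hset : {S : Set V | {u} ⊆ S ∧ (G.induce S).Connected} = A ∪ B := by
      ext S
      simp only [Set.singleton_subset_iff, Set.mem_setOf_eq, Set.mem_union, hA, hB]
      by_cases hvS : v ∈ S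
      · tauto
      · tauto
    have hdisj : Disjoint A B := by
      rw [Set.disjoint_left]
      rintro S ⟨_, hvS, _⟩ ⟨_, hvS', _⟩
      exact hvS hvS'
    rw [numSubtrees, numSubtreesOn, hset, Set.ncard_union_eq hdisj (Set.toFinite _) (Set.toFinite _)]
  -- numSubtrees v = 1 + B.ncard
  have hv1 : numSubtrees G v = 1 + B.ncard := by
    have hset : {S : Set V | {v} ⊆ S ∧ (G.induce S).Connected} = insert {v} B := by
      ext S
      simp only [Set.singleton_subset_iff, Set.mem_setOf_eq, Set.mem_insert_iff, hB]
      constructor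
      · rintro ⟨hvS, hc⟩
        by_cases hS : S = {v}
        · exact Or.inl hS
        · refine Or.inr ⟨?_, hvS, hc⟩
          -- S has another vertex, so u ∈ S
          obtain ⟨x, hxS, hxv⟩ : ∃ x ∈ S, x ≠ v := by
            by_contra hcon
            push_neg at hcon
            exact hS (Set.eq_singleton_iff_unique_mem.mpr ⟨hvS, hcon⟩)
          obtain ⟨p⟩ := hc.preconnected ⟨v, hvS⟩ ⟨x, hxS⟩
          cases p with
          | nil => exact absurd rfl hxv
          | @cons _ z _ h _ =>
            have hz : G.Adj v z.1 := h
            exact (huniq z.1 hz) ▸ z.2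
      · rintro (rfl | ⟨_, hvS, hc⟩)
        · exact ⟨rfl, conn_singleton G v⟩
        · exact ⟨hvS, hc⟩
    have hnot : ({v} : Set V) ∉ B := by
      rintro ⟨huv, -, -⟩
      exact hadj.ne' huv
    rw [numSubtrees, numSubtreesOn, hset, Set.ncard_insert_of_notMem hnot (Set.toFinite _)]
    omega
  -- A has at least two elements
  have hA2 : 2 ≤ A.ncard := by
    have h1 : ({u} : Set V) ∈ A := by
      refine ⟨rfl, ?_, conn_singleton G u⟩
      simpa using hadj.ne
    have h2 : ({u, w} : Set V) ∈ A := by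
      refine ⟨Or.inl rfl, ?_, conn_pair G hw⟩
      simp only [Set.mem_insert_iff, Set.mem_singleton_iff]
      push_neg
      exact ⟨hadj.ne, fun h => hwv h.symm⟩
    have hne : ({u} : Set V) ≠ ({u, w} : Set V) := by
      intro h
      have : w ∈ ({u} : Set V) := h ▸ (Or.inr rfl : w ∈ ({u, w} : Set V))
      exact hw.ne' this
    exact (Set.one_lt_ncard_iff (Set.toFinite A)).mpr ⟨{u}, {u, w}, h1, h2, hne⟩
  -- conclude
  intro hcore
  have := hcore u
  rw [hu2, hv1, hcard] at this
  omega
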